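/- For any measurable set A, the dual norm of the indicator satisfies ‖1_A‖_σ* = P(A) / ∫_{1−P(A)}^1 σ(u) du, and consequently P(A) ≤ ‖1_A‖_σ* ≤ 1. -/

import Mathlib

open MeasureTheory ENNReal

/-- The (left-continuous) quantile function of X: F_X^{-1}(p) = inf{y : P(X ≤ y) ≥ p}. -/
noncomputable def quantile {Ω : Type*} [MeasurableSpace Ω] (μ : Measure Ω)
    (X : Ω → ℝ) (p : ℝ) : ℝ :=
  sInf {y : ℝ | p ≤ (μ {ω | X ω ≤ y}).toReal}

/-- The σ-norm ‖Y‖_σ = ∫₀¹ σ(u)·F_{|Y|}^{-1}(u) du, valued in [0,∞]. -/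
noncomputable def sigmaNorm {Ω : Type*} [MeasurableSpace Ω] (μ : Measure Ω)
    (σ : ℝ → ℝ) (Y : Ω → ℝ) : ℝ≥0∞ :=
  ∫⁻ u in Set.Ioo (0 : ℝ) 1, ENNReal.ofReal (σ u * quantile μ (fun ω => |Y ω|) u)

/-- The Average Value-at-Risk at level α. -/
noncomputable def avar {Ω : Type*} [MeasurableSpace Ω] (μ : Measure Ω)
    (X : Ω → ℝ) (α : ℝ) : ℝ :=
  (1 - α)⁻¹ * ∫ u in α..1, quantile μ X u

/-- The dual σ-norm ‖Z‖_σ* = inf{η ≥ 0 : AVaR_α(|Z|) ≤ (η/(1−α))∫_α¹ σ for all α ∈ [0,1)}. -/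
noncomputable def sigmaDualNorm {Ω : Type*} [MeasurableSpace Ω] (μ : Measure Ω)
    (σ : ℝ → ℝ) (Z : Ω → ℝ) : ℝ :=
  sInf {η : ℝ | 0 ≤ η ∧ ∀ α ∈ Set.Ico (0 : ℝ) 1,
    avar μ (fun ω => |Z ω|) α ≤ η / (1 - α) * ∫ u in α..1, σ u}

/-- the dual norm of an indicator is
‖1_A‖_σ* = P(A)/∫_{1−P(A)}¹ σ(u)du, and P(A) ≤ ‖1_A‖_σ* ≤ 1. -/

lemma sig_ii {σ : ℝ → ℝ} (hσm : MonotoneOn σ (Set.Icc (0:ℝ) 1)) {a b : ℝ}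
    (ha : 0 ≤ a) (hab : a ≤ b) (hb : b ≤ 1) : IntervalIntegrable σ volume a b := by
  apply MonotoneOn.intervalIntegrable
  apply hσm.mono
  rw [Set.uIcc_of_le hab]
  exact Set.Icc_subset_Icc ha hb

lemma int_le {σ : ℝ → ℝ} (hσm : MonotoneOn σ (Set.Icc (0:ℝ) 1)) {a b : ℝ}
    (ha : 0 ≤ a) (hab : a ≤ b) (hb : b ≤ 1) : ∫ u in a..b, σ u ≤ (b - a) * σ b := by
  have h := intervalIntegral.integral_mono_on hab (sig_ii hσm ha hab hb)
    (_root_.intervalIntegrable_const (c := σ b))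
    (fun u hu => hσm ⟨le_trans ha hu.1, le_trans hu.2 hb⟩ ⟨le_trans ha hab, hb⟩ hu.2)
  simpa [smul_eq_mul] using h

lemma le_int {σ : ℝ → ℝ} (hσm : MonotoneOn σ (Set.Icc (0:ℝ) 1)) {a b : ℝ}
    (ha : 0 ≤ a) (hab : a ≤ b) (hb : b ≤ 1) : (b - a) * σ a ≤ ∫ u in a..b, σ u := by
  have h := intervalIntegral.integral_mono_on hab (_root_.intervalIntegrable_const (c := σ a))
    (sig_ii hσm ha hab hb)
    (fun u hu => hσm ⟨ha, le_trans hab hb⟩ ⟨le_trans ha hu.1, le_trans hu.2 hb⟩ hu.1)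
  simpa [smul_eq_mul] using h

lemma S_split {σ : ℝ → ℝ} (hσm : MonotoneOn σ (Set.Icc (0:ℝ) 1)) {a b : ℝ}
    (ha : 0 ≤ a) (hab : a ≤ b) (hb : b ≤ 1) :
    ∫ u in a..1, σ u = (∫ u in a..b, σ u) + ∫ u in b..1, σ u :=
  (intervalIntegral.integral_add_adjacent_intervals (sig_ii hσm ha hab hb)
    (sig_ii hσm (le_trans ha hab) hb le_rfl)).symm

lemma S_nonneg {σ : ℝ → ℝ} (hσ0 : ∀ u ∈ Set.Icc (0:ℝ) 1, 0 ≤ σ u) {a : ℝ}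
    (ha : 0 ≤ a) (ha1 : a ≤ 1) : 0 ≤ ∫ u in a..1, σ u :=
  intervalIntegral.integral_nonneg ha1 (fun u hu => hσ0 u ⟨le_trans ha hu.1, hu.2⟩)

lemma S_mono {σ : ℝ → ℝ} (hσ0 : ∀ u ∈ Set.Icc (0:ℝ) 1, 0 ≤ σ u)
    (hσm : MonotoneOn σ (Set.Icc (0:ℝ) 1)) {a b : ℝ}
    (ha : 0 ≤ a) (hab : a ≤ b) (hb : b ≤ 1) :
    ∫ u in b..1, σ u ≤ ∫ u in a..1, σ u := by
  rw [S_split hσm ha hab hb]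
  have : 0 ≤ ∫ u in a..b, σ u :=
    intervalIntegral.integral_nonneg hab (fun u hu => hσ0 u ⟨le_trans ha hu.1, le_trans hu.2 hb⟩)
  linarith

lemma S_le_one {σ : ℝ → ℝ} (hσ0 : ∀ u ∈ Set.Icc (0:ℝ) 1, 0 ≤ σ u)
    (hσm : MonotoneOn σ (Set.Icc (0:ℝ) 1)) (hσ1 : (∫ u in (0:ℝ)..1, σ u) = 1) {a : ℝ}
    (ha : 0 ≤ a) (ha1 : a ≤ 1) : ∫ u in a..1, σ u ≤ 1 := by
  have := S_mono hσ0 hσm le_rfl ha ha1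
  rwa [hσ1] at this

lemma S_lb {σ : ℝ → ℝ} (hσ0 : ∀ u ∈ Set.Icc (0:ℝ) 1, 0 ≤ σ u)
    (hσm : MonotoneOn σ (Set.Icc (0:ℝ) 1)) (hσ1 : (∫ u in (0:ℝ)..1, σ u) = 1) {a : ℝ}
    (ha : 0 ≤ a) (ha1 : a ≤ 1) : 1 - a ≤ ∫ u in a..1, σ u := by
  have hsplit := S_split hσm le_rfl ha ha1
  rw [hσ1] at hsplit
  have h2 := int_le hσm le_rfl ha ha1
  have h3 := le_int hσm ha ha1 le_rfl
  have h4 := hσ0 a ⟨ha, ha1⟩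
  nlinarith [mul_le_mul_of_nonneg_left h2 (by linarith : (0:ℝ) ≤ 1 - a),
    mul_le_mul_of_nonneg_left h3 ha]

lemma key2 {σ : ℝ → ℝ} (hσ0 : ∀ u ∈ Set.Icc (0:ℝ) 1, 0 ≤ σ u)
    (hσm : MonotoneOn σ (Set.Icc (0:ℝ) 1)) {q a : ℝ}
    (hq1 : q ≤ 1) (hqa : 1 - q ≤ a) (ha1 : a ≤ 1) :
    (1 - a) * ∫ u in (1-q)..1, σ u ≤ q * ∫ u in a..1, σ u := by
  have h0q : (0:ℝ) ≤ 1 - q := by linarith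
  have hsplit := S_split hσm h0q hqa ha1
  have h2 := int_le hσm h0q hqa ha1
  have h3 := le_int hσm (le_trans h0q hqa) ha1 le_rfl
  have h4 := hσ0 a ⟨le_trans h0q hqa, ha1⟩
  nlinarith [mul_le_mul_of_nonneg_left h2 (by linarith : (0:ℝ) ≤ 1 - a),
    mul_le_mul_of_nonneg_left h3 (by linarith : (0:ℝ) ≤ a - (1 - q))]

lemma quantile_ind {Ω : Type*} [MeasurableSpace Ω] (μ : Measure Ω) [IsProbabilityMeasure μ]
    (A : Set Ω) (hA : MeasurableSet A) {u : ℝ} (hu0 : 0 < u) (hu1 : u ≤ 1) :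
    quantile μ (fun ω => |A.indicator (fun _ => (1:ℝ)) ω|) u
      = if u ≤ 1 - (μ A).toReal then 0 else 1 := by
  have habs : ∀ ω, |A.indicator (fun _ => (1:ℝ)) ω| = A.indicator (fun _ => (1:ℝ)) ω :=
    fun ω => abs_of_nonneg (Set.indicator_nonneg (fun _ _ => zero_le_one) ω)
  have hind01 : ∀ ω, A.indicator (fun _ => (1:ℝ)) ω = 0 ∨ A.indicator (fun _ => (1:ℝ)) ω = 1 := by
    intro ω
    by_cases hω : ω ∈ A
    · right; simp [hω]
    · left; simp [hω]
  have hcompl : (μ Aᶜ).toReal = 1 - (μ A).toReal := by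
    rw [prob_compl_eq_one_sub hA, ENNReal.toReal_sub_of_le prob_le_one one_ne_top,
      ENNReal.toReal_one]
  have hmeas : ∀ y : ℝ, (μ {ω | |A.indicator (fun _ => (1:ℝ)) ω| ≤ y}).toReal
      = if y < 0 then 0 else if y < 1 then 1 - (μ A).toReal else 1 := by
    intro y
    simp only [habs]
    rcases lt_or_ge y 0 with hy | hy
    · have : {ω | A.indicator (fun _ => (1:ℝ)) ω ≤ y} = ∅ := by
        ext ω
        simp only [Set.mem_setOf_eq, Set.mem_empty_iff_false, iff_false, not_le]
        rcases hind01 ω with h | h <;> rw [h] <;> linarith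
      simp [this, hy]
    · rcases lt_or_ge y 1 with hy1 | hy1
      · have : {ω | A.indicator (fun _ => (1:ℝ)) ω ≤ y} = Aᶜ := by
          ext ω
          by_cases hω : ω ∈ A <;> simp [hω]
          · linarith
          · linarith
        rw [this, hcompl]
        simp [not_lt.mpr hy, hy1]
      · have : {ω | A.indicator (fun _ => (1:ℝ)) ω ≤ y} = Set.univ := by
          ext ω
          simp only [Set.mem_setOf_eq, Set.mem_univ, iff_true]
          rcases hind01 ω with h | h <;> rw [h] <;> linarith
        rw [this]
        simp [not_lt.mpr hy, not_lt.mpr hy1]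
  unfold quantile
  split_ifs with hcase
  · -- sInf = 0
    have hmem : (0:ℝ) ∈ {y : ℝ | u ≤ (μ {ω | |A.indicator (fun _ => (1:ℝ)) ω| ≤ y}).toReal} := by
      simp only [Set.mem_setOf_eq, hmeas]
      norm_num
      exact hcase
    have hlb : ∀ y ∈ {y : ℝ | u ≤ (μ {ω | |A.indicator (fun _ => (1:ℝ)) ω| ≤ y}).toReal},
        (0:ℝ) ≤ y := by
      intro y hy
      by_contra hneg
      push_neg at hneg
      simp only [Set.mem_setOf_eq, hmeas, if_pos hneg] at hy
      linarith
    exact le_antisymm (csInf_le ⟨0, hlb⟩ hmem) (le_csInf ⟨0, hmem⟩ hlb)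
  · -- sInf = 1
    push_neg at hcase
    have hmem : (1:ℝ) ∈ {y : ℝ | u ≤ (μ {ω | |A.indicator (fun _ => (1:ℝ)) ω| ≤ y}).toReal} := by
      simp only [Set.mem_setOf_eq, hmeas]
      norm_num
      exact hu1
    have hlb : ∀ y ∈ {y : ℝ | u ≤ (μ {ω | |A.indicator (fun _ => (1:ℝ)) ω| ≤ y}).toReal},
        (1:ℝ) ≤ y := by
      intro y hy
      by_contra hneg
      push_neg at hneg
      simp only [Set.mem_setOf_eq, hmeas] at hy
      rcases lt_or_ge y 0 with h0 | h0
      · rw [if_pos h0] at hy; linarith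
      · rw [if_neg (not_lt.mpr h0), if_pos hneg] at hy; linarith
    exact le_antisymm (csInf_le ⟨1, hlb⟩ hmem) (le_csInf ⟨1, hmem⟩ hlb)

lemma avar_ind {Ω : Type*} [MeasurableSpace Ω] (μ : Measure Ω) [IsProbabilityMeasure μ]
    (A : Set Ω) (hA : MeasurableSet A) {α : ℝ} (hα0 : 0 ≤ α) (hα1 : α < 1) :
    avar μ (fun ω => |A.indicator (fun _ => (1:ℝ)) ω|) α
      = (1 - α)⁻¹ * min (1 - α) (μ A).toReal := by
  set q := (μ A).toReal with hq
  have hq0 : 0 ≤ q := ENNReal.toReal_nonneg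
  have hq1 : q ≤ 1 := by
    rw [hq]
    exact ENNReal.toReal_le_of_le_ofReal zero_le_one (by simpa using prob_le_one)
  unfold avar
  congr 1
  rw [intervalIntegral.integral_of_le hα1.le]
  have hEq : Set.EqOn (fun u => quantile μ (fun ω => |A.indicator (fun _ => (1:ℝ)) ω|) u)
      (fun u => Set.indicator (Set.Ioi (1 - q)) (fun _ => (1:ℝ)) u) (Set.Ioc α 1) := by
    intro u hu
    dsimp only
    rw [quantile_ind μ A hA (lt_of_le_of_lt hα0 hu.1) hu.2]
    by_cases h : u ≤ 1 - q
    · simp [Set.indicator_of_notMem, Set.mem_Ioi, not_lt.mpr h, h]; exact h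
    · push_neg at h
      simp [Set.indicator_of_mem, Set.mem_Ioi.mpr h, not_le.mpr h]; exact h
  rw [setIntegral_congr_fun measurableSet_Ioc hEq]
  rw [setIntegral_indicator measurableSet_Ioi]
  have hset : Set.Ioc α 1 ∩ Set.Ioi (1 - q) = Set.Ioc (max α (1 - q)) 1 := by
    rw [Set.Ioc_inter_Ioi]
  rw [hset]
  rw [setIntegral_const]
  rw [measureReal_def, Real.volume_Ioc, smul_eq_mul, mul_one,
    ENNReal.toReal_ofReal (sub_nonneg.mpr (max_le hα1.le (by linarith)))]
  rcases le_total α (1 - q) with h | h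
  · rw [max_eq_right h, min_eq_right (by linarith)]; ring
  · rw [max_eq_left h, min_eq_left (by linarith)]

theorem stmt16 {Ω : Type*} [MeasurableSpace Ω] (μ : Measure Ω) [IsProbabilityMeasure μ]
    (σ : ℝ → ℝ) (hσ0 : ∀ u ∈ Set.Icc (0 : ℝ) 1, 0 ≤ σ u)
    (hσm : MonotoneOn σ (Set.Icc (0 : ℝ) 1)) (hσmeas : Measurable σ)
    (hσ1 : (∫ u in (0 : ℝ)..1, σ u) = 1)
    (A : Set Ω) (hA : MeasurableSet A) :
    sigmaDualNorm μ σ (A.indicator fun _ => (1 : ℝ)) =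
      (μ A).toReal / (∫ u in (1 - (μ A).toReal)..1, σ u) ∧
    (μ A).toReal ≤ sigmaDualNorm μ σ (A.indicator fun _ => (1 : ℝ)) ∧
    sigmaDualNorm μ σ (A.indicator fun _ => (1 : ℝ)) ≤ 1 := by
  set q := (μ A).toReal with hq
  have hq0 : 0 ≤ q := ENNReal.toReal_nonneg
  have hq1 : q ≤ 1 := by
    rw [hq]
    exact ENNReal.toReal_le_of_le_ofReal zero_le_one (by simpa using prob_le_one)
  set T : Set ℝ := {η : ℝ | 0 ≤ η ∧ ∀ α ∈ Set.Ico (0 : ℝ) 1,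
    avar μ (fun ω => |(A.indicator fun _ => (1:ℝ)) ω|) α ≤ η / (1 - α) * ∫ u in α..1, σ u}
    with hT
  have hTiff : ∀ η : ℝ, η ∈ T ↔
      (0 ≤ η ∧ ∀ α ∈ Set.Ico (0 : ℝ) 1, min (1 - α) q ≤ η * ∫ u in α..1, σ u) := by
    intro η
    rw [hT]
    simp only [Set.mem_setOf_eq, and_congr_right_iff]
    intro hη
    apply forall₂_congr
    intro α hα
    have h1α : (0:ℝ) < 1 - α := by linarith [hα.2]
    rw [avar_ind μ A hA hα.1 hα.2]
    rw [div_mul_eq_mul_div, inv_mul_eq_div, div_le_div_iff_of_pos_right h1α]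
  have hbdd : BddBelow T := ⟨0, fun η hη => hη.1⟩
  have hS_nonneg : ∀ a : ℝ, 0 ≤ a → a ≤ 1 → 0 ≤ ∫ u in a..1, σ u :=
    fun a h h' => S_nonneg hσ0 h h'
  rcases eq_or_lt_of_le hq0 with hq0' | hq0'
  · -- q = 0
    have hmem : (0:ℝ) ∈ T := by
      rw [hTiff]
      refine ⟨le_rfl, fun α hα => ?_⟩
      rw [← hq0']
      simp [min_le_right]
    have hinf : sigmaDualNorm μ σ (A.indicator fun _ => (1 : ℝ)) = 0 := by
      unfold sigmaDualNorm
      rw [← hT]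
      exact le_antisymm (csInf_le hbdd hmem) (le_csInf ⟨0, hmem⟩ fun η hη => hη.1)
    rw [hinf, ← hq0']
    norm_num
  · -- q > 0
    set Sq := ∫ u in (1 - q)..1, σ u with hSq
    have hSq_lb : q ≤ Sq := by
      have := S_lb hσ0 hσm hσ1 (by linarith : (0:ℝ) ≤ 1 - q) (by linarith)
      linarith
    have hSq_pos : 0 < Sq := lt_of_lt_of_le hq0' hSq_lb
    have hSq_le : Sq ≤ 1 := S_le_one hσ0 hσm hσ1 (by linarith) (by linarith)
    have hmem : q / Sq ∈ T := by
      rw [hTiff]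
      refine ⟨div_nonneg hq0 hSq_pos.le, fun α hα => ?_⟩
      rcases le_total α (1 - q) with hcase | hcase
      · rw [min_eq_right (by linarith)]
        have hSmono : Sq ≤ ∫ u in α..1, σ u := S_mono hσ0 hσm hα.1 hcase (by linarith)
        calc q = q / Sq * Sq := by field_simp
        _ ≤ q / Sq * ∫ u in α..1, σ u :=
            mul_le_mul_of_nonneg_left hSmono (div_nonneg hq0 hSq_pos.le)
      · rw [min_eq_left (by linarith)]
        rw [div_mul_eq_mul_div, le_div_iff₀ hSq_pos]
        exact key2 hσ0 hσm hq1 hcase hα.2.le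
    have hlow : ∀ η ∈ T, q / Sq ≤ η := by
      intro η hη
      rw [hTiff] at hη
      have hc := hη.2 (1 - q) ⟨by linarith, by linarith⟩
      rw [show (1:ℝ) - (1 - q) = q by ring, min_self] at hc
      rw [div_le_iff₀ hSq_pos]
      exact hc
    have hinf : sigmaDualNorm μ σ (A.indicator fun _ => (1 : ℝ)) = q / Sq := by
      unfold sigmaDualNorm
      rw [← hT]
      exact le_antisymm (csInf_le hbdd hmem) (le_csInf ⟨_, hmem⟩ hlow)
    refine ⟨hinf, ?_, ?_⟩
    · rw [hinf, le_div_iff₀ hSq_pos]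
      exact mul_le_of_le_one_right hq0 hSq_le
    · rw [hinf, div_le_one hSq_pos]
      exact hSq_lb
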